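/- Let G be a finite group with a normal subgroup S, acting on Ω, and suppose G = G₁S where G₁ is a point stabilizer. Given a stabilizer chain G > G₁ > ⋯ > G_k = 1, set M_i = G_i ∩ S. Then for each i, either M_i > M_{i+1} or G_i/M_i > G_{i+1}/M_{i+1} (as subgroups of G/S under the natural isomorphisms). Consequently k ≤ ℓ(S-chain) + ℓ(G/S) where the number of indices i with M_i = M_{i+1} is at most the maximum length of a strict subgroup chain in G/S, which is at most log₂|G/S|. -/

import Mathlib

open scoped Classical

def listStab (G : Type*) {Ω : Type*} [Group G] [MulAction G Ω] (l : List Ω) : Subgroup G :=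
  ⨅ ω ∈ l, MulAction.stabilizer G ω

def IsBase (G : Type*) {Ω : Type*} [Group G] [MulAction G Ω] (l : List Ω) : Prop :=
  listStab G l = ⊥

def IsIrredundant (G : Type*) {Ω : Type*} [Group G] [MulAction G Ω] (l : List Ω) : Prop :=
  ∀ k < l.length, listStab G (l.take (k + 1)) < listStab G (l.take k)

def IsMinimalBase (G : Type*) {Ω : Type*} [Group G] [MulAction G Ω] (l : List Ω) : Prop :=
  IsBase G l ∧ ∀ l' : List Ω, l'.Sublist l → l' ≠ l → ¬ IsBase G l'

def IsIndependentSeq (G : Type*) {Ω : Type*} [Group G] [MulAction G Ω] (l : List Ω) : Prop :=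
  ∀ k < l.length, listStab G (l.eraseIdx k) ≠ listStab G l

noncomputable def minBaseSize (G Ω : Type*) [Group G] [MulAction G Ω] : ℕ∞ :=
  sInf {n : ℕ∞ | ∃ l : List Ω, IsBase G l ∧ (l.length : ℕ∞) = n}

noncomputable def maxMinBase (G Ω : Type*) [Group G] [MulAction G Ω] : ℕ∞ :=
  sSup {n : ℕ∞ | ∃ l : List Ω, IsMinimalBase G l ∧ (l.length : ℕ∞) = n}

noncomputable def heightStat (G Ω : Type*) [Group G] [MulAction G Ω] : ℕ∞ :=
  sSup {n : ℕ∞ | ∃ l : List Ω, IsIndependentSeq G l ∧ (l.length : ℕ∞) = n}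

noncomputable def irredStat (G Ω : Type*) [Group G] [MulAction G Ω] : ℕ∞ :=
  sSup {n : ℕ∞ | ∃ l : List Ω, IsIrredundant G l ∧ (l.length : ℕ∞) = n}


section Aux

variable {Γ : Type*} [Group Γ] [Finite Γ]

lemma two_mul_card_le_of_lt {H K : Subgroup Γ} (h : H < K) :
    2 * Nat.card H ≤ Nat.card K := by
  have hdvd : Nat.card H ∣ Nat.card K := Subgroup.card_dvd_of_le h.le
  have hlt : Nat.card H < Nat.card K := by
    have : (H : Set Γ) ⊂ (K : Set Γ) := by exact_mod_cast h
    exact Set.Finite.card_lt_card (Set.toFinite _) this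
  obtain ⟨m, hm⟩ := hdvd
  have hH : 0 < Nat.card H := Nat.card_pos
  have hm2 : 2 ≤ m := by
    by_contra hm2
    interval_cases m <;> omega
  calc 2 * Nat.card H ≤ Nat.card H * m := by nlinarith
    _ = Nat.card K := hm.symm

lemma chain_count {Q : ℕ → Subgroup Γ} (n : ℕ) (hQ : ∀ i < n, Q (i + 1) ≤ Q i) :
    2 ^ ((Finset.range n).filter (fun i => Q (i + 1) < Q i)).card * Nat.card (Q n)
      ≤ Nat.card (Q 0) := by
  induction n with
  | zero => simp
  | succ n ih =>
    have ih' := ih (fun i hi => hQ i (by omega))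
    rw [Finset.range_add_one, Finset.filter_insert]
    by_cases h : Q (n + 1) < Q n
    · rw [if_pos h, Finset.card_insert_of_notMem (by simp)]
      have := two_mul_card_le_of_lt h
      calc 2 ^ (_ + 1) * Nat.card (Q (n+1))
          = 2 ^ ((Finset.range n).filter (fun i => Q (i + 1) < Q i)).card
            * (2 * Nat.card (Q (n+1))) := by ring
        _ ≤ 2 ^ ((Finset.range n).filter (fun i => Q (i + 1) < Q i)).card * Nat.card (Q n) :=
            Nat.mul_le_mul_left _ this
        _ ≤ _ := ih'
    · rw [if_neg h]
      have heq : Q (n + 1) = Q n := ((hQ n (by omega)).lt_or_eq).resolve_left h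
      rw [heq]; exact ih'

end Aux

/-- let `S ⊴ G` finite, `G = G₁S` with `G₁` the first point stabilizer, and
`G > G₁ > ⋯ > G_k = 1` a stabilizer chain coming from an irredundant base `l`.  With
`M_i = G_i ∩ S`, for each `i` either `M_i > M_{i+1}` or the image of `G_i` in `G/S`
properly contains that of `G_{i+1}`; consequently the number of indices with
`M_i = M_{i+1}` is at most the maximum length of a subgroup chain in `G/S`, which is at
most `log₂ |G/S|`. -/
theorem stmt_16 {G Ω : Type*} [Group G] [Finite G] [MulAction G Ω]
    (S : Subgroup G) [S.Normal]
    (l : List Ω) (hl : IsIrredundant G l) (hbase : IsBase G l) (hne : l ≠ [])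
    (hGS : MulAction.stabilizer G (l.head hne) ⊔ S = ⊤) :
    (∀ i < l.length,
      (listStab G (l.take (i + 1)) ⊓ S < listStab G (l.take i) ⊓ S) ∨
      ((listStab G (l.take (i + 1))).map (QuotientGroup.mk' S) <
        (listStab G (l.take i)).map (QuotientGroup.mk' S))) ∧
    ((Finset.range l.length).filter
        (fun i => listStab G (l.take (i + 1)) ⊓ S = listStab G (l.take i) ⊓ S)).card ≤
      Nat.log 2 (Nat.card (G ⧸ S)) := by
  have hmono : ∀ i < l.length, listStab G (l.take (i + 1)) ≤ listStab G (l.take i) :=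
    fun i hi => (hl i hi).le
  have part1 : ∀ i < l.length,
      (listStab G (l.take (i + 1)) ⊓ S < listStab G (l.take i) ⊓ S) ∨
      ((listStab G (l.take (i + 1))).map (QuotientGroup.mk' S) <
        (listStab G (l.take i)).map (QuotientGroup.mk' S)) := by
    intro i hi
    set B := listStab G (l.take (i + 1)) with hB
    set A := listStab G (l.take i) with hA
    have hBA : B < A := hl i hi
    by_cases h : B ⊓ S < A ⊓ S
    · exact Or.inl h
    · have heq : B ⊓ S = A ⊓ S :=
        ((inf_le_inf_right S hBA.le).lt_or_eq).resolve_left h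
      right
      refine lt_of_le_of_ne (Subgroup.map_mono hBA.le) ?_
      intro hmapeq
      refine hBA.2 ?_
      intro g hg
      have hmem : (QuotientGroup.mk' S) g ∈ B.map (QuotientGroup.mk' S) := by
        rw [hmapeq]; exact ⟨g, hg, rfl⟩
      obtain ⟨b, hbB, hb⟩ := hmem
      have hz : b⁻¹ * g ∈ S := by
        have := (QuotientGroup.mk'_eq_mk' (N := S)).mp hb
        obtain ⟨z, hzS, hzeq⟩ := this
        rwa [← hzeq, inv_mul_cancel_left]
      have hzA : b⁻¹ * g ∈ A ⊓ S := ⟨A.mul_mem (A.inv_mem (hBA.le hbB)) hg, hz⟩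
      rw [← heq] at hzA
      have : b * (b⁻¹ * g) ∈ B := B.mul_mem hbB hzA.1
      rwa [mul_inv_cancel_left] at this
  refine ⟨part1, ?_⟩
  set Q : ℕ → Subgroup (G ⧸ S) := fun i => (listStab G (l.take i)).map (QuotientGroup.mk' S)
    with hQdef
  have hsub : ((Finset.range l.length).filter
        (fun i => listStab G (l.take (i + 1)) ⊓ S = listStab G (l.take i) ⊓ S)) ⊆
      ((Finset.range l.length).filter (fun i => Q (i + 1) < Q i)) := by
    intro i hi
    rw [Finset.mem_filter] at hi ⊢
    refine ⟨hi.1, ?_⟩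
    rcases part1 i (Finset.mem_range.mp hi.1) with h | h
    · exact absurd hi.2 h.ne
    · exact h
  have hcount := chain_count (Q := Q) l.length
    (fun i hi => Subgroup.map_mono (hmono i hi))
  have hQ0 : Q 0 = ⊤ := by
    have : listStab G (l.take 0) = ⊤ := by simp [listStab]
    rw [hQdef]
    simp only [this]
    exact Subgroup.map_top_of_surjective _ (QuotientGroup.mk'_surjective S)
  rw [hQ0, Subgroup.card_top] at hcount
  have hpow : 2 ^ ((Finset.range l.length).filter (fun i => Q (i + 1) < Q i)).card ≤
      Nat.card (G ⧸ S) :=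
    le_trans (Nat.le_mul_of_pos_right _ Nat.card_pos) hcount
  have hle : 2 ^ ((Finset.range l.length).filter
        (fun i => listStab G (l.take (i + 1)) ⊓ S = listStab G (l.take i) ⊓ S)).card ≤
      Nat.card (G ⧸ S) :=
    le_trans (Nat.pow_le_pow_right (by norm_num) (Finset.card_le_card hsub)) hpow
  exact (Nat.le_log_iff_pow_le one_lt_two Nat.card_pos.ne').mpr hle
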